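/- The Fourier transform of the time-domain Gaussian oscillator: for $a, \sigma, \Omega > 0$, the function $\chi_G(t) = a\, e^{-t^2\sigma^2/4} \sin(\Omega t)\, \theta(t)$ satisfies $\int_0^\infty e^{\iota\omega t}\, \chi_G(t)\, dt = \iota A\,[\,w((\omega-\Omega)/\sigma) - w((\omega+\Omega)/\sigma)\,]$ for all real $\omega$, where $A = a\sqrt{\pi}/(2\sigma)$ and $w$ is the Faddeeva function. -/

import Mathlib

open Complex

noncomputable def cerf (z : ℂ) : ℂ :=
  (2 / Real.sqrt Real.pi) * ∫ t in (0:ℝ)..1, z * Complex.exp (-((t:ℂ) * z)^2)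

noncomputable def cerfc (z : ℂ) : ℂ := 1 - cerf z

/-- The Faddeeva function `w(z) = e^{-z²} erfc(-I z)`. -/
noncomputable def faddeeva (z : ℂ) : ℂ := Complex.exp (-z^2) * cerfc (-Complex.I * z)

open MeasureTheory Set Filter


lemma arg_eq (s x : ℝ) : -((s:ℂ) - Complex.I*x)^2 = -1*(s:ℂ)^2 + (2*Complex.I*x)*(s:ℂ) + (x:ℂ)^2 := by
  linear_combination (-(x:ℂ)^2) * Complex.I_sq

lemma norm_aux (s x : ℝ) : ‖Complex.exp (-((s:ℂ) - Complex.I*x)^2)‖ = Real.exp (x^2 - s^2) := by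
  rw [Complex.norm_exp]
  congr 1
  simp [sq, Complex.sub_re, Complex.mul_re, Complex.mul_im]

lemma integrable_aux (x : ℝ) : Integrable (fun s : ℝ => Complex.exp (-((s:ℂ) - Complex.I*x)^2)) := by
  have h := integrable_cexp_quadratic (b := 1) (by simp) (2*Complex.I*x) ((x:ℂ)^2)
  simpa only [← arg_eq] using h

lemma integrable_abs_gauss : Integrable (fun s : ℝ => |s| * Real.exp (-s^2)) := by
  have h := (integrable_mul_cexp_neg_mul_sq (b := (1:ℂ)) (by simp)).norm
  have : ∀ s : ℝ, ‖(s:ℂ) * Complex.exp (-1*(s:ℂ)^2)‖ = |s| * Real.exp (-s^2) := by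
    intro s
    rw [norm_mul, Complex.norm_exp, Complex.norm_real,
      Real.norm_eq_abs]
    congr 2
    simp [Complex.mul_re, ← Complex.ofReal_pow]
  simpa only [this] using h

lemma integrable_bound (B : ℝ) :
    Integrable (fun s : ℝ => 2*(|s|+B)*Real.exp (B^2) * Real.exp (-s^2)) := by
  have h1 := integrable_abs_gauss.const_mul (2*Real.exp (B^2))
  have h2 := (integrable_exp_neg_mul_sq (b := (1:ℝ)) one_pos).const_mul (2*B*Real.exp (B^2))
  have h3 := h1.add h2
  convert h3 using 1
  · rfl
  funext s
  simp only [Pi.add_apply, neg_mul, one_mul]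
  ring

lemma norm_deriv (s x : ℝ) :
    ‖((s:ℂ) - Complex.I*x) * Complex.exp (-((s:ℂ) - Complex.I*x)^2)‖
      ≤ (|s|+|x|) * Real.exp (x^2 - s^2) := by
  rw [norm_mul, norm_aux]
  gcongr
  calc ‖(s:ℂ) - Complex.I*x‖ ≤ ‖(s:ℂ)‖ + ‖Complex.I*(x:ℂ)‖ := norm_sub_le _ _
    _ = |s| + |x| := by simp

noncomputable def gfun (β : ℝ) : ℂ := ∫ s in Set.Ioi (0:ℝ), Complex.exp (-((s:ℂ) - Complex.I*β)^2)

lemma hasDerivAt_inner (s x : ℝ) :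
    HasDerivAt (fun x : ℝ => Complex.exp (-((s:ℂ) - Complex.I*x)^2))
      (2*Complex.I*((s:ℂ) - Complex.I*x) * Complex.exp (-((s:ℂ) - Complex.I*x)^2)) x := by
  have h1 : HasDerivAt (fun w : ℂ => (s:ℂ) - Complex.I*w) (-Complex.I) ((x:ℝ):ℂ) := by
    simpa using ((hasDerivAt_id ((x:ℝ):ℂ)).const_mul Complex.I).const_sub (s:ℂ)
  have h2 : HasDerivAt (fun w : ℂ => -((s:ℂ) - Complex.I*w)^2)
      (2*Complex.I*((s:ℂ) - Complex.I*x)) ((x:ℝ):ℂ) := by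
    have := (h1.pow 2).neg
    exact this.congr_deriv (by ring)
  simpa [mul_comm] using (h2.cexp).comp_ofReal

lemma hasDerivAt_inner_s (x : ℝ) (s : ℝ) :
    HasDerivAt (fun s : ℝ => Complex.exp (-((s:ℂ) - Complex.I*x)^2))
      (-2*((s:ℂ) - Complex.I*x) * Complex.exp (-((s:ℂ) - Complex.I*x)^2)) s := by
  have h1 : HasDerivAt (fun w : ℂ => w - Complex.I*x) 1 ((s:ℝ):ℂ) := by
    simpa using (hasDerivAt_id ((s:ℝ):ℂ)).sub_const (Complex.I*x)
  have h2 : HasDerivAt (fun w : ℂ => -(w - Complex.I*x)^2)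
      (-2*((s:ℂ) - Complex.I*x)) ((s:ℝ):ℂ) := by
    have := (h1.pow 2).neg
    exact this.congr_deriv (by ring)
  simpa [mul_comm] using (h2.cexp).comp_ofReal

lemma cont_deriv (x : ℝ) :
    Continuous (fun s : ℝ => ((s:ℂ) - Complex.I*x) * Complex.exp (-((s:ℂ) - Complex.I*x)^2)) := by
  fun_prop

lemma integrable_deriv (x : ℝ) :
    Integrable (fun s : ℝ => ((s:ℂ) - Complex.I*x) * Complex.exp (-((s:ℂ) - Complex.I*x)^2)) := by
  apply Integrable.mono (g := fun s : ℝ => (|s|+|x|) * Real.exp (x^2) * Real.exp (-s^2))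
  · have := integrable_bound |x|  -- 2(|s|+|x|)e^{x²}... not matching; build directly
    have h1 := integrable_abs_gauss.const_mul (Real.exp (x^2))
    have h2 := (integrable_exp_neg_mul_sq (b := (1:ℝ)) one_pos).const_mul (|x| * Real.exp (x^2))
    have h3 := h1.add h2
    convert h3 using 1
    · rfl
    funext s
    simp only [Pi.add_apply, neg_mul, one_mul]
    ring
  · exact (cont_deriv x).aestronglyMeasurable
  · filter_upwards with s
    calc ‖((s:ℂ) - Complex.I*x) * Complex.exp (-((s:ℂ) - Complex.I*x)^2)‖
        ≤ (|s|+|x|) * Real.exp (x^2 - s^2) := norm_deriv s x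
      _ = (|s|+|x|) * Real.exp (x^2) * Real.exp (-s^2) := by rw [mul_assoc, ← Real.exp_add]; ring_nf
      _ ≤ ‖(|s|+|x|) * Real.exp (x^2) * Real.exp (-s^2)‖ := le_abs_self _

lemma integral_deriv_s (x : ℝ) :
    (∫ s in Set.Ioi (0:ℝ), -2*((s:ℂ) - Complex.I*x) * Complex.exp (-((s:ℂ) - Complex.I*x)^2))
      = -Complex.exp ((x:ℂ)^2) := by
  have key := MeasureTheory.integral_Ioi_of_hasDerivAt_of_tendsto
    (f := fun s : ℝ => Complex.exp (-((s:ℂ) - Complex.I*x)^2))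
    (f' := fun s : ℝ => -2*((s:ℂ) - Complex.I*x) * Complex.exp (-((s:ℂ) - Complex.I*x)^2))
    (a := 0) (m := 0)
    ((hasDerivAt_inner_s x 0).continuousAt).continuousWithinAt
    (fun s _ => hasDerivAt_inner_s x s)
    ?_ ?_
  · rw [key, zero_sub, neg_inj]
    push_cast
    congr 1
    linear_combination (-(x:ℂ)^2) * Complex.I_sq
  · have := ((integrable_deriv x).const_mul (-2)).integrableOn (s := Set.Ioi (0:ℝ))
    simpa [mul_assoc] using this
  · rw [tendsto_zero_iff_norm_tendsto_zero]
    simp only [norm_aux]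
    have h2 : Tendsto (fun s : ℝ => x^2 - s^2) atTop atBot := by
      have : Tendsto (fun s : ℝ => -(s^2)) atTop atBot :=
        tendsto_neg_atBot_iff.mpr (tendsto_pow_atTop two_ne_zero)
      simpa [sub_eq_add_neg] using tendsto_atBot_add_const_left atTop (x^2) this
    exact Real.tendsto_exp_atBot.comp h2

lemma hasDerivAt_gfun (β : ℝ) :
    HasDerivAt gfun (Complex.I * Complex.exp ((β:ℂ)^2)) β := by
  set B := |β| + 1 with hB
  have hB0 : 0 ≤ B := by positivity
  have key := hasDerivAt_integral_of_dominated_loc_of_deriv_le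
    (μ := volume.restrict (Set.Ioi (0:ℝ))) (𝕜 := ℝ)
    (F := fun (x : ℝ) (s : ℝ) => Complex.exp (-((s:ℂ) - Complex.I*x)^2))
    (F' := fun (x : ℝ) (s : ℝ) =>
      2*Complex.I*((s:ℂ) - Complex.I*x) * Complex.exp (-((s:ℂ) - Complex.I*x)^2))
    (x₀ := β) (bound := fun s => 2*(|s|+B)*Real.exp (B^2) * Real.exp (-s^2))
    (Metric.ball_mem_nhds β one_pos) ?_ ?_ ?_ ?_ ?_ ?_
  · have h2 := key.2
    rw [show (∫ s in Set.Ioi (0:ℝ),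
        2*Complex.I*((s:ℂ) - Complex.I*β) * Complex.exp (-((s:ℂ) - Complex.I*β)^2))
        = Complex.I * Complex.exp ((β:ℂ)^2) from ?_] at h2
    · exact h2
    · have : ∀ s : ℝ, 2*Complex.I*((s:ℂ) - Complex.I*β) * Complex.exp (-((s:ℂ) - Complex.I*β)^2)
          = (-Complex.I) * (-2*((s:ℂ) - Complex.I*β) * Complex.exp (-((s:ℂ) - Complex.I*β)^2)) := by
        intro s; ring
      simp only [this]
      rw [MeasureTheory.integral_const_mul, integral_deriv_s]
      ring
  · filter_upwards with x
    exact (Complex.continuous_exp.comp (by fun_prop)).aestronglyMeasurable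
  · exact (integrable_aux β).integrableOn
  · exact Continuous.aestronglyMeasurable (by fun_prop)
  · filter_upwards with s
    intro x hx
    have hxB : |x| ≤ B := by
      have := mem_ball_iff_norm.mp hx
      rw [Real.norm_eq_abs] at this
      have h1 : |x| ≤ |x - β| + |β| := abs_sub_abs_le_abs_sub x β |>.trans (le_refl _) |> fun h => by
        have := abs_sub_abs_le_abs_sub x β; linarith [abs_nonneg (x-β)]
      calc |x| = |x - β + β| := by ring_nf
        _ ≤ |x - β| + |β| := abs_add_le _ _
        _ ≤ 1 + |β| := by linarith
        _ = B := by rw [hB]; ring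
    calc ‖2*Complex.I*((s:ℂ) - Complex.I*x) * Complex.exp (-((s:ℂ) - Complex.I*x)^2)‖
        = 2 * ‖((s:ℂ) - Complex.I*x) * Complex.exp (-((s:ℂ) - Complex.I*x)^2)‖ := by
          rw [mul_assoc, norm_mul]; simp
      _ ≤ 2 * ((|s|+|x|) * Real.exp (x^2 - s^2)) := by
          have := norm_deriv s x; linarith
      _ ≤ 2 * ((|s|+B) * (Real.exp (B^2) * Real.exp (-s^2))) := by
          rw [← Real.exp_add]
          have h1 : |s| + |x| ≤ |s| + B := by linarith
          have h2 : Real.exp (x^2 - s^2) ≤ Real.exp (B^2 + -s^2) := by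
            apply Real.exp_le_exp.mpr
            have : x^2 ≤ B^2 := by
              rw [← _root_.sq_abs x]
              exact pow_le_pow_left₀ (abs_nonneg x) hxB 2
            linarith
          have hs : 0 ≤ |s| + |x| := by positivity
          have he : 0 ≤ Real.exp (x^2 - s^2) := Real.exp_nonneg _
          nlinarith [Real.exp_nonneg (B^2 + -s^2), abs_nonneg s]
      _ = 2*(|s|+B)*Real.exp (B^2) * Real.exp (-s^2) := by ring
  · exact (integrable_bound B).integrableOn
  · filter_upwards with s
    intro x hx
    exact hasDerivAt_inner s x

lemma cont_exp_sq : Continuous (fun u : ℝ => Complex.exp ((u:ℂ)^2)) := by fun_prop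

lemma hasDerivAt_hfun (β : ℝ) :
    HasDerivAt (fun β : ℝ => ((Real.sqrt Real.pi / 2 : ℝ) : ℂ)
        + Complex.I * ∫ u in (0:ℝ)..β, Complex.exp ((u:ℂ)^2))
      (Complex.I * Complex.exp ((β:ℂ)^2)) β := by
  have h := intervalIntegral.integral_hasDerivAt_right
    (f := fun u : ℝ => Complex.exp ((u:ℂ)^2)) (a := 0) (b := β)
    (cont_exp_sq.intervalIntegrable 0 β)
    (cont_exp_sq.stronglyMeasurableAtFilter _ _)
    cont_exp_sq.continuousAt
  exact (h.const_mul Complex.I).const_add _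

lemma gfun_zero : gfun 0 = ((Real.sqrt Real.pi / 2 : ℝ) : ℂ) := by
  unfold gfun
  have : ∀ s : ℝ, Complex.exp (-((s:ℂ) - Complex.I*(0:ℝ))^2)
      = ((Real.exp (-s^2) : ℝ) : ℂ) := by
    intro s
    rw [Complex.ofReal_exp]
    congr 1
    push_cast
    ring
  simp only [this]
  rw [show (∫ s in Set.Ioi (0:ℝ), ((Real.exp (-s^2) : ℝ) : ℂ))
      = ((∫ s in Set.Ioi (0:ℝ), Real.exp (-s^2) : ℝ) : ℂ) from integral_ofReal]
  norm_cast
  have hg := integral_gaussian_Ioi 1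
  simp only [neg_mul, one_mul] at hg
  rw [hg]
  norm_num

lemma gfun_eq (β : ℝ) : gfun β = ((Real.sqrt Real.pi / 2 : ℝ) : ℂ)
    + Complex.I * ∫ u in (0:ℝ)..β, Complex.exp ((u:ℂ)^2) := by
  set h : ℝ → ℂ := fun β => ((Real.sqrt Real.pi / 2 : ℝ) : ℂ)
    + Complex.I * ∫ u in (0:ℝ)..β, Complex.exp ((u:ℂ)^2) with hh
  have hd : ∀ x : ℝ, HasDerivAt (fun y => gfun y - h y) 0 x := by
    intro x
    have := (hasDerivAt_gfun x).sub (hasDerivAt_hfun x)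
    rw [hh]
    rw [sub_self] at this
    exact this
  have hconst : (fun y => gfun y - h y) β = (fun y => gfun y - h y) 0 :=
    is_const_of_deriv_eq_zero (fun x => (hd x).differentiableAt)
      (fun x => (hd x).deriv) β 0
  have h0 : h 0 = ((Real.sqrt Real.pi / 2 : ℝ) : ℂ) := by
    simp [hh]
  have h2 := hconst
  simp only [gfun_zero, h0] at h2
  have : gfun β - h β = 0 := by rw [h2]; ring
  have := sub_eq_zero.mp this
  rw [this, hh]

lemma cerf_neg_I (β : ℝ) :
    ((Real.sqrt Real.pi / 2 : ℝ) : ℂ) * cerf (-Complex.I * β)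
      = -Complex.I * ∫ u in (0:ℝ)..β, Complex.exp ((u:ℂ)^2) := by
  have harg : ∀ t : ℝ, -((t:ℂ) * (-Complex.I * β))^2 = (((β*t : ℝ)):ℂ)^2 := by
    intro t
    push_cast
    linear_combination (-(t:ℂ)^2*(β:ℂ)^2) * Complex.I_sq
  unfold cerf
  simp only [harg]
  rw [intervalIntegral.integral_const_mul]
  by_cases hβ : β = 0
  · simp [hβ]
  · have hs := intervalIntegral.integral_comp_mul_left
      (fun u : ℝ => Complex.exp (((u:ℝ):ℂ)^2)) hβ (a := 0) (b := 1)
    simp only [mul_zero, mul_one] at hs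
    rw [hs]
    have hπ : ((Real.sqrt Real.pi : ℝ) : ℂ) ≠ 0 := by
      exact_mod_cast (by positivity : Real.sqrt Real.pi ≠ 0)
    have hβc : ((β : ℝ) : ℂ) ≠ 0 := by exact_mod_cast hβ
    rw [Complex.real_smul]
    push_cast
    field_simp

lemma gfun_eq' (β : ℝ) :
    gfun β = ((Real.sqrt Real.pi / 2 : ℝ) : ℂ) * cerfc (-Complex.I * β) := by
  rw [gfun_eq, cerfc, mul_sub, mul_one, cerf_neg_I]
  ring

lemma integrable_E (σ u : ℝ) (hσ : 0 < σ) :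
    Integrable (fun s : ℝ => Complex.exp (Complex.I*u*s - (σ:ℂ)^2/4*(s:ℂ)^2)) := by
  have hb : (0:ℝ) < ((σ:ℂ)^2/4).re := by
    rw [show (σ:ℂ)^2/4 = ((σ^2/4 : ℝ):ℂ) by push_cast; ring, Complex.ofReal_re]
    positivity
  have h := integrable_cexp_quadratic (b := (σ:ℂ)^2/4) hb (Complex.I*u) 0
  have : ∀ s : ℝ, -((σ:ℂ)^2/4)*(s:ℂ)^2 + (Complex.I*u)*(s:ℂ) + 0
      = Complex.I*u*s - (σ:ℂ)^2/4*(s:ℂ)^2 := by intro s; ring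
  simpa only [this] using h

lemma K_eval (σ u : ℝ) (hσ : 0 < σ) :
    (∫ s in Set.Ioi (0:ℝ), Complex.exp (Complex.I*u*s - (σ:ℂ)^2/4*(s:ℂ)^2))
      = ((Real.sqrt Real.pi / σ : ℝ) : ℂ) * faddeeva ((u/σ : ℝ) : ℂ) := by
  set β : ℝ := u / σ with hβ
  have hσc : ((σ:ℝ):ℂ) ≠ 0 := by exact_mod_cast hσ.ne'
  have hu : (u:ℂ) = (σ:ℂ)*(β:ℂ) := by
    rw [hβ]; push_cast; field_simp
  have harg : ∀ s : ℝ, Complex.I*u*s - (σ:ℂ)^2/4*(s:ℂ)^2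
      = -(β:ℂ)^2 + (-((((σ/2)*s : ℝ):ℂ) - Complex.I*β)^2) := by
    intro s
    rw [hu]
    push_cast
    linear_combination ((β:ℂ)^2) * Complex.I_sq
  simp only [harg, Complex.exp_add]
  rw [MeasureTheory.integral_const_mul]
  have hcomp := integral_comp_mul_left_Ioi
    (fun r : ℝ => Complex.exp (-((r:ℂ) - Complex.I*β)^2)) 0 (by positivity : (0:ℝ) < σ/2)
  simp only [mul_zero] at hcomp
  rw [hcomp, ← gfun, gfun_eq' β, faddeeva, Complex.real_smul]
  push_cast
  field_simp

lemma csin_eq (z : ℂ) :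
    Complex.sin z = (Complex.exp (-z*Complex.I) - Complex.exp (z*Complex.I)) * Complex.I / 2 := rfl

/-- One-sided Fourier transform of the time-domain Gaussian oscillator
`χ_G(t) = a e^{-t²σ²/4} sin(Ω t) θ(t)` equals `I A [w((ω-Ω)/σ) - w((ω+Ω)/σ)]`
with `A = a √π/(2σ)`. -/
theorem gaussian_oscillator_fourier (a σ Ω : ℝ) (ha : 0 < a) (hσ : 0 < σ) (hΩ : 0 < Ω)
    (ω : ℝ) :
    (∫ t in Set.Ioi (0:ℝ), Complex.exp (Complex.I * (ω : ℂ) * (t : ℂ)) *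
        ((a : ℂ) * (Real.exp (-t^2 * σ^2 / 4) : ℂ) * (Real.sin (Ω * t) : ℂ))) =
      Complex.I * ((a * Real.sqrt Real.pi / (2 * σ) : ℝ) : ℂ) *
        (faddeeva (((ω - Ω) / σ : ℝ) : ℂ) - faddeeva (((ω + Ω) / σ : ℝ) : ℂ)) := by
  have hpt : ∀ t : ℝ, Complex.exp (Complex.I * (ω : ℂ) * (t : ℂ)) *
        ((a : ℂ) * (Real.exp (-t^2 * σ^2 / 4) : ℂ) * (Real.sin (Ω * t) : ℂ))
      = (a:ℂ)*Complex.I/2 *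
          (Complex.exp (Complex.I*((ω-Ω : ℝ):ℂ)*t - (σ:ℂ)^2/4*(t:ℂ)^2)
            - Complex.exp (Complex.I*((ω+Ω : ℝ):ℂ)*t - (σ:ℂ)^2/4*(t:ℂ)^2)) := by
    intro t
    rw [Complex.ofReal_sin, csin_eq, Complex.ofReal_exp]
    have e1 : Complex.I*((ω-Ω : ℝ):ℂ)*t - (σ:ℂ)^2/4*(t:ℂ)^2
        = (Complex.I*ω*t) + ((-t^2*σ^2/4 : ℝ):ℂ) + (-((Ω*t : ℝ):ℂ)*Complex.I) := by
      push_cast; ring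
    have e2 : Complex.I*((ω+Ω : ℝ):ℂ)*t - (σ:ℂ)^2/4*(t:ℂ)^2
        = (Complex.I*ω*t) + ((-t^2*σ^2/4 : ℝ):ℂ) + (((Ω*t : ℝ):ℂ)*Complex.I) := by
      push_cast; ring
    rw [e1, e2, Complex.exp_add, Complex.exp_add, Complex.exp_add, Complex.exp_add]
    ring
  simp only [hpt]
  rw [MeasureTheory.integral_const_mul,
    MeasureTheory.integral_sub ((integrable_E σ (ω-Ω) hσ).integrableOn)
      ((integrable_E σ (ω+Ω) hσ).integrableOn),
    K_eval σ (ω-Ω) hσ, K_eval σ (ω+Ω) hσ]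
  have hσc : ((σ:ℝ):ℂ) ≠ 0 := by exact_mod_cast hσ.ne'
  push_cast
  field_simp
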